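/- If an acute Euclidean angle φ has Euclidean reference angle ψ (so the angle spans from ψ to φ+ψ measured from the x-axis) and lies entirely in the first quadrant (0 ≤ ψ < ψ+φ ≤ π/2), then its taxicab measure is θ = 2/(1+tan ψ) - 2/(1+tan(φ+ψ)) = 2 sin φ / ((cos(φ+ψ) + sin(φ+ψ))(cos ψ + sin ψ)). -/

import Mathlib

open Real

/-- An acute Euclidean angle φ with reference angle ψ, lying entirely in the
first quadrant, has taxicab measure
2/(1+tan ψ) - 2/(1+tan(φ+ψ)) = 2 sin φ/((cos(φ+ψ)+sin(φ+ψ))(cos ψ+sin ψ)).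
The taxicab measure is the taxicab distance between the points where the rays
at Euclidean angles ψ and φ+ψ meet the line x + y = 1. -/
theorem taxicab_measure_acute_in_quadrant (φ ψ : ℝ) (hψ : 0 ≤ ψ) (hφ : 0 < φ)
    (h : ψ + φ ≤ π / 2)
    (P Q : ℝ × ℝ)
    (hP : P = (cos ψ / (cos ψ + sin ψ), sin ψ / (cos ψ + sin ψ)))
    (hQ : Q = (cos (φ + ψ) / (cos (φ + ψ) + sin (φ + ψ)),
               sin (φ + ψ) / (cos (φ + ψ) + sin (φ + ψ)))) :
    |Q.1 - P.1| + |Q.2 - P.2|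
      = 2 * sin φ / ((cos (φ + ψ) + sin (φ + ψ)) * (cos ψ + sin ψ)) ∧
    (ψ + φ < π / 2 →
      |Q.1 - P.1| + |Q.2 - P.2|
        = 2 / (1 + tan ψ) - 2 / (1 + tan (φ + ψ))) := by
  have hπ : (0:ℝ) < π / 2 := by positivity
  have hψlt : ψ < π / 2 := lt_of_lt_of_le (by linarith) h
  have hcψ : 0 < cos ψ := cos_pos_of_mem_Ioo ⟨by linarith [pi_pos], hψlt⟩
  have hsψ : 0 ≤ sin ψ := sin_nonneg_of_nonneg_of_le_pi hψ (by linarith [pi_pos])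
  have hA : 0 < cos ψ + sin ψ := by linarith
  have hφψ1 : 0 < φ + ψ := by linarith
  have hφψ2 : φ + ψ ≤ π / 2 := by linarith
  have hcB : 0 ≤ cos (φ + ψ) := cos_nonneg_of_mem_Icc ⟨by linarith, hφψ2⟩
  have hsB : 0 < sin (φ + ψ) := sin_pos_of_pos_of_lt_pi hφψ1 (by linarith [pi_pos])
  have hB : 0 < cos (φ + ψ) + sin (φ + ψ) := by linarith
  have hsφ : 0 < sin φ := sin_pos_of_pos_of_lt_pi hφ (by linarith [pi_pos])
  have hkey : cos ψ * sin (φ + ψ) - sin ψ * cos (φ + ψ) = sin φ := by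
    rw [sin_add, cos_add]; nlinarith [sin_sq_add_cos_sq ψ]
  have hx : Q.1 - P.1 = -(sin φ) / ((cos (φ + ψ) + sin (φ + ψ)) * (cos ψ + sin ψ)) := by
    rw [hP, hQ]
    field_simp
    nlinarith [hkey]
  have hy : Q.2 - P.2 = sin φ / ((cos (φ + ψ) + sin (φ + ψ)) * (cos ψ + sin ψ)) := by
    rw [hP, hQ]
    field_simp
    nlinarith [hkey]
  have hmain : |Q.1 - P.1| + |Q.2 - P.2|
      = 2 * sin φ / ((cos (φ + ψ) + sin (φ + ψ)) * (cos ψ + sin ψ)) := by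
    rw [hx, hy, abs_div, abs_div, abs_neg, abs_of_pos hsφ,
      abs_of_pos (mul_pos hB hA)]
    ring
  refine ⟨hmain, fun hlt => ?_⟩
  have hcB' : 0 < cos (φ + ψ) :=
    cos_pos_of_mem_Ioo ⟨by linarith [pi_pos], by linarith⟩
  have ht1 : 2 / (1 + tan ψ) = 2 * cos ψ / (cos ψ + sin ψ) := by
    rw [tan_eq_sin_div_cos]; field_simp
  have ht2 : 2 / (1 + tan (φ + ψ)) = 2 * cos (φ + ψ) / (cos (φ + ψ) + sin (φ + ψ)) := by
    rw [tan_eq_sin_div_cos]; field_simp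
  rw [hmain, ht1, ht2]
  field_simp
  linear_combination (-1) * hkey
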